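/- Let (X,τ) be a metrizable locally solid vector lattice. Then the unbounded topology uτ is metrizable if and only if there is an at most countable set A ⊆ X such that the τ-closure of the ideal I(A) generated by A is all of X. -/

import Mathlib

open Filter Set Topology

variable {X : Type*} [Lattice X] [AddCommGroup X] [Module ℝ X]
  [CovariantClass X X (· + ·) (· ≤ ·)] [PosSMulMono ℝ X]

/-- The Archimedean property for a lattice-ordered group. -/
def VLArchimedean (X : Type*) [Lattice X] [AddCommGroup X] : Prop :=
  ∀ x y : X, 0 ≤ x → (∀ n : ℕ, n • x ≤ y) → x = 0

/-- A set is solid if `x ∈ S` and `|y| ≤ |x|` imply `y ∈ S`. -/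
def IsSolid (S : Set X) : Prop := ∀ ⦃x y : X⦄, x ∈ S → |y| ≤ |x| → y ∈ S

/-- A locally solid (linear) topology on a vector lattice. -/
def IsLocallySolidTop (τ : TopologicalSpace X) : Prop :=
  @IsTopologicalAddGroup X τ _ ∧ @ContinuousSMul ℝ X _ _ τ ∧
    ∀ U ∈ @nhds X τ 0, ∃ V ∈ @nhds X τ 0, IsSolid V ∧ V ⊆ U

/-- An order ideal: a solid linear subspace. -/
def IsOrderIdeal (A : Set X) : Prop :=
  0 ∈ A ∧ (∀ x ∈ A, ∀ y ∈ A, x + y ∈ A) ∧ (∀ (c : ℝ), ∀ x ∈ A, c • x ∈ A) ∧ IsSolid A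

/-- The order ideal generated by a set. -/
def idealGenerated (A : Set X) : Set X := ⋂₀ {I | IsOrderIdeal I ∧ A ⊆ I}

/-- A band: an order ideal closed under existing suprema. -/
def IsBand (B : Set X) : Prop :=
  IsOrderIdeal B ∧ ∀ D ⊆ B, ∀ x : X, IsLUB D x → x ∈ B

/-- The band generated by a set. -/
def bandGenerated (A : Set X) : Set X := ⋂₀ {B | IsBand B ∧ A ⊆ B}

/-- `A` is a countable order basis: `A` is at most countable and generates `X` as a band. -/
def CountableOrderBasis (A : Set X) : Prop := A.Countable ∧ bandGenerated A = Set.univ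

/-- The neighbourhood filter of zero of the unbounded topology `u_A τ`:
generated by the sets `{x : |x| ⊓ a ∈ U}` for `U` a `τ`-neighbourhood of zero, `a ∈ A₊`. -/
def unbNhdsZero (τ : TopologicalSpace X) (A : Set X) : Filter X :=
  ⨅ a ∈ {a ∈ A | 0 ≤ a}, Filter.comap (fun x => |x| ⊓ a) (@nhds X τ 0)

/-- The unbounded topology `u_A τ` induced by the ideal `A`; `u τ = unbTopology τ Set.univ`. -/
def unbTopology (τ : TopologicalSpace X) (A : Set X) : TopologicalSpace X :=
  TopologicalSpace.mkOfNhds fun x => Filter.map (x + ·) (unbNhdsZero τ A)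

/-- A sublattice/ideal is order dense if every nonzero positive vector dominates a
nonzero positive vector of it. -/
def OrderDense (A : Set X) : Prop := ∀ x : X, 0 < x → ∃ y ∈ A, 0 < y ∧ y ≤ x

/-- A minimal topology: a Hausdorff locally solid topology with no strictly coarser
Hausdorff locally solid topology. (In Mathlib's order on `TopologicalSpace`,
`τ ≤ σ` means `τ` is finer than `σ`.) -/
def IsMinimalTop (τ : TopologicalSpace X) : Prop :=
  IsLocallySolidTop τ ∧ @T2Space X τ ∧
    ∀ σ : TopologicalSpace X, IsLocallySolidTop σ → @T2Space X σ → τ ≤ σ → σ = τ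

/-- The countable sup property. -/
def CountableSupProperty (Y : Type*) [Lattice Y] : Prop :=
  ∀ S : Set Y, ∀ x : Y, S.Nonempty → IsLUB S x → ∃ C ⊆ S, C.Countable ∧ IsLUB C x

/-- Order convergence to zero of a net: there is a downward directed set `D` with
infimum `0`, each member of which eventually dominates `|x α|`. -/
def OrderNull {ι : Type*} [Preorder ι] (x : ι → X) : Prop :=
  ∃ D : Set X, D.Nonempty ∧ (∀ a ∈ D, ∀ b ∈ D, ∃ c ∈ D, c ≤ a ∧ c ≤ b) ∧
    IsGLB D 0 ∧ ∀ d ∈ D, ∃ α₀ : ι, ∀ α, α₀ ≤ α → |x α| ≤ d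

/-- Unbounded order (uo-) convergence to zero of a net. -/
def UoNull {ι : Type*} [Preorder ι] (x : ι → X) : Prop :=
  ∀ u : X, 0 ≤ u → OrderNull (fun α => |x α| ⊓ u)

/-- A set is topologically bounded if it is absorbed by every neighbourhood of zero. -/
def TopBounded (τ : TopologicalSpace X) (S : Set X) : Prop :=
  ∀ U ∈ @nhds X τ 0, ∃ l : ℝ, 0 < l ∧ ∀ x ∈ S, l • x ∈ U

/-- A locally bounded topology: it has a topologically bounded neighbourhood of zero. -/
def LocallyBoundedTop (τ : TopologicalSpace X) : Prop :=
  ∃ V ∈ @nhds X τ 0, TopBounded τ V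

/-- A submetrizable topology: finer than some metrizable linear topology.
(In Mathlib's order on `TopologicalSpace`, `τ ≤ σ` means `τ` is finer than `σ`.) -/
def Submetrizable (τ : TopologicalSpace X) : Prop :=
  ∃ σ : TopologicalSpace X, @IsTopologicalAddGroup X σ _ ∧ @ContinuousSMul ℝ X _ _ σ ∧
    @TopologicalSpace.MetrizableSpace X σ ∧ τ ≤ σ

/-- A Riesz submetrizable topology: finer than some metrizable locally solid topology. -/
def RieszSubmetrizable (τ : TopologicalSpace X) : Prop :=
  ∃ σ : TopologicalSpace X, IsLocallySolidTop σ ∧ @TopologicalSpace.MetrizableSpace X σ ∧ τ ≤ σ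

/-- Dedekind (order) completeness. -/
def DedekindComplete (Y : Type*) [Lattice Y] : Prop :=
  ∀ S : Set Y, S.Nonempty → BddAbove S → ∃ x, IsLUB S x

/-- Lateral completeness: every nonempty set of pairwise disjoint positive vectors
has a supremum. -/
def LaterallyComplete (Y : Type*) [Lattice Y] [AddCommGroup Y] : Prop :=
  ∀ S : Set Y, S.Nonempty → (∀ x ∈ S, 0 ≤ x) → (S.Pairwise fun a b => a ⊓ b = 0) →
    ∃ x, IsLUB S x


section AuxLemmas

set_option linter.unusedSectionVars false

/-- The basic unbounded-neighbourhood set. -/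
def USet (V : Set X) (a : X) : Set X := {y : X | |y| ⊓ a ∈ V}

lemma sub_inf_eq' (a b : X) : a - a ⊓ b = (a - b) ⊔ 0 := by
  rw [sub_eq_add_neg, neg_inf, add_sup, add_neg_cancel, sup_comm, sub_eq_add_neg]

lemma inf_subadd {a b c : X} (ha : 0 ≤ a) (hb : 0 ≤ b) (hc : 0 ≤ c) :
    (b + c) ⊓ a ≤ b ⊓ a + c ⊓ a := by
  have h : b ⊓ a + c ⊓ a = ((b + c) ⊓ (a + c)) ⊓ ((b + a) ⊓ (a + a)) := by
    rw [add_inf, inf_add, inf_add]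
  rw [h]
  refine le_inf (le_inf inf_le_left ?_) (le_inf ?_ ?_)
  · exact inf_le_right.trans (le_add_of_nonneg_right hc)
  · exact inf_le_right.trans (le_add_of_nonneg_left hb)
  · exact inf_le_right.trans (le_add_of_nonneg_left ha)

lemma abs_inf_subadd {y z a : X} (ha : 0 ≤ a) : |y + z| ⊓ a ≤ |y| ⊓ a + |z| ⊓ a :=
  (inf_le_inf_right a (abs_add_le y z)).trans (inf_subadd ha (abs_nonneg y) (abs_nonneg z))

lemma step_lem {a u d : X} (hu : 0 ≤ u) (hd1 : d ≤ a ⊔ 0) (hdu : d ≤ u) :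
    (a ⊔ 0) + d ≤ (a + u) ⊔ 0 := by
  have h1 : (a ⊔ 0) + d = (a + d) ⊔ d := by rw [sup_add, zero_add]
  rw [h1]
  exact sup_le (le_sup_of_le_left (add_le_add_right hdu a))
    (hd1.trans (sup_le_sup_right (le_add_of_nonneg_right hu) 0))

lemma key_lem {x a : X} (hx : 0 ≤ x) (ha : 0 ≤ a) (k : ℕ) :
    k • (((x - k • a) ⊔ 0) ⊓ a) ≤ x := by
  set d := ((x - k • a) ⊔ 0) ⊓ a with hd
  have hda : d ≤ a := inf_le_right
  have hdle : ∀ j : ℕ, j ≤ k → d ≤ (x - j • a) ⊔ 0 := by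
    intro j hj
    refine inf_le_left.trans (sup_le_sup_right (sub_le_sub_left ?_ x) 0)
    exact nsmul_le_nsmul_left ha hj
  have main : ∀ j : ℕ, j ≤ k → ((x - j • a) ⊔ 0) + j • d ≤ x := by
    intro j
    induction j with
    | zero => simp [hx, sup_of_le_left hx]
    | succ n ih =>
      intro hn
      have h1 : ((x - (n+1) • a) ⊔ 0) + d ≤ (x - n • a) ⊔ 0 := by
        have h2 := step_lem ha (hdle (n+1) hn) hda (a := x - (n+1) • a)
        rwa [show x - (n+1) • a + a = x - n • a by rw [succ_nsmul]; abel] at h2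
      calc ((x - (n+1) • a) ⊔ 0) + (n+1) • d
          = (((x - (n+1) • a) ⊔ 0) + d) + n • d := by
            rw [succ_nsmul d n, ← add_assoc, add_right_comm]
        _ ≤ ((x - n • a) ⊔ 0) + n • d := add_le_add_left h1 _
        _ ≤ x := ih (Nat.le_of_succ_le hn)
  calc k • d ≤ ((x - k • a) ⊔ 0) + k • d := le_add_of_nonneg_left le_sup_right
    _ ≤ x := main k le_rfl

lemma smul_abs_le' (c : ℝ) (y : X) : c • y ≤ |c| • |y| := by
  rcases le_or_gt 0 c with hc | hc
  · rw [abs_of_nonneg hc]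
    exact smul_le_smul_of_nonneg_left (le_abs_self y) hc
  · rw [abs_of_neg hc]
    calc c • y = (-c) • (-y) := by rw [neg_smul, smul_neg, neg_neg]
      _ ≤ (-c) • |y| := smul_le_smul_of_nonneg_left (neg_le_abs y) (by linarith)

lemma abs_smul_le' (c : ℝ) (y : X) : |c • y| ≤ |c| • |y| := by
  refine abs_le'.mpr ⟨smul_abs_le' c y, ?_⟩
  rw [← neg_smul]
  simpa using smul_abs_le' (-c) y

lemma smul_mono_scalar {c c' : ℝ} {x : X} (h : c ≤ c') (hx : 0 ≤ x) : c • x ≤ c' • x := by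
  have h0 : 0 ≤ (c' - c) • x := smul_nonneg (by linarith) hx
  calc c • x ≤ c • x + (c' - c) • x := le_add_of_nonneg_right h0
    _ = c' • x := by rw [← add_smul]; congr 1; ring

lemma isOrderIdeal_idealGenerated (A : Set X) : IsOrderIdeal (idealGenerated A) := by
  refine ⟨?_, ?_, ?_, ?_⟩
  · exact fun I hI => hI.1.1
  · intro x hx y hy I hI
    exact hI.1.2.1 x (hx I hI) y (hy I hI)
  · intro c x hx I hI
    exact hI.1.2.2.1 c x (hx I hI)
  · intro x y hx hxy I hI
    exact hI.1.2.2.2 (hx I hI) hxy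

lemma subset_idealGenerated (A : Set X) : A ⊆ idealGenerated A :=
  fun _ ha _ hI => hI.2 ha

lemma idealGenerated_min {A J : Set X} (hJ : IsOrderIdeal J) (hA : A ⊆ J) :
    idealGenerated A ⊆ J := fun _ hx => hx J ⟨hJ, hA⟩

lemma mem_idealGenerated_of_le {A : Set X} {a m : X} (haA : a ∈ A) (ha : 0 ≤ a) {k : ℕ}
    (h : |m| ≤ k • a) : m ∈ idealGenerated A := by
  intro I hI
  have h1 : (k : ℝ) • a ∈ I := hI.1.2.2.1 (k : ℝ) a (hI.2 haA)
  refine hI.1.2.2.2 h1 ?_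
  have hk : ((k : ℝ)) • a = k • a := Nat.cast_smul_eq_nsmul ℝ k a
  rw [hk, abs_of_nonneg (nsmul_nonneg ha k)]
  exact h

end AuxLemmas
section FilterLemmas

set_option linter.unusedSectionVars false
set_option maxHeartbeats 800000

lemma USet_mem {τ : TopologicalSpace X} {A : Set X} {a : X} (haA : a ∈ A) (ha : 0 ≤ a)
    {V : Set X} (hV : V ∈ @nhds X τ 0) : USet V a ∈ unbNhdsZero τ A :=
  mem_iInf_of_mem a (mem_iInf_of_mem ⟨haA, ha⟩ (preimage_mem_comap hV))

lemma pure_le_unb (τ : TopologicalSpace X) (A : Set X) :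
    pure (0 : X) ≤ unbNhdsZero τ A := by
  refine le_iInf fun a => le_iInf fun ha => ?_
  rw [← Filter.map_le_iff_le_comap, Filter.map_pure]
  have h0 : |(0 : X)| ⊓ a = 0 := by rw [abs_zero, inf_eq_left.mpr ha.2]
  letI := τ
  rw [h0]
  exact pure_le_nhds 0

lemma unb_mem_reduction {τ : TopologicalSpace X} (hτ : IsLocallySolidTop τ) {S : Set X}
    (hS : S ∈ unbNhdsZero τ Set.univ) :
    ∃ a : X, 0 ≤ a ∧ ∃ V ∈ @nhds X τ 0, IsSolid V ∧ USet V a ⊆ S := by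
  letI := τ
  rw [unbNhdsZero, ← iInf_subtype''] at hS
  rw [Filter.mem_iInf'] at hS
  obtain ⟨I, hIfin, V, hV, -, hUeq, -⟩ := hS
  choose T hT hTV using fun i => Filter.mem_comap.1 (hV i)
  set a : X := ∑ i ∈ hIfin.toFinset, (i : X) with ha
  have ha0 : 0 ≤ a :=
    Finset.sum_induction _ (fun z : X => 0 ≤ z) (fun a b ha hb => add_nonneg ha hb) le_rfl
      (fun i _ => i.2.2)
  have hTmem : (⋂ i ∈ I, T i) ∈ 𝓝 (0 : X) := (Filter.biInter_mem hIfin).2 fun i _ => hT i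
  obtain ⟨W, hW, hWsolid, hWsub⟩ := hτ.2.2 _ hTmem
  refine ⟨a, ha0, W, hW, hWsolid, ?_⟩
  intro y hy
  rw [hUeq, mem_iInter₂]
  intro i hiI
  apply hTV i
  have hia : (i : X) ≤ a := by
    classical
    have herase := Finset.add_sum_erase hIfin.toFinset (fun j => (j : X)) (hIfin.mem_toFinset.2 hiI)
    have hpos : (0 : X) ≤ ∑ j ∈ (hIfin.toFinset.erase i), (j : X) :=
      Finset.sum_induction _ (fun z : X => 0 ≤ z) (fun a b ha hb => add_nonneg ha hb) le_rfl
        (fun j _ => j.2.2)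
    rw [ha, ← herase]
    exact le_add_of_nonneg_right hpos
  have h0i : (0 : X) ≤ |y| ⊓ (i : X) := le_inf (abs_nonneg y) i.2.2
  have h0a : (0 : X) ≤ |y| ⊓ a := le_inf (abs_nonneg y) ha0
  have hmem : |y| ⊓ (i : X) ∈ W := by
    refine hWsolid hy ?_
    rw [abs_of_nonneg h0i, abs_of_nonneg h0a]
    exact inf_le_inf_left _ hia
  have := hWsub hmem
  rw [mem_iInter₂] at this
  exact this i hiI

lemma unb_add_split {τ : TopologicalSpace X} (hτ : IsLocallySolidTop τ) {S : Set X}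
    (hS : S ∈ unbNhdsZero τ Set.univ) :
    ∃ T ∈ unbNhdsZero τ Set.univ, T ⊆ S ∧ ∀ y ∈ T, ∀ z ∈ T, y + z ∈ S := by
  letI := τ
  haveI := hτ.1
  obtain ⟨a, ha0, V, hV, hVsolid, hVS⟩ := unb_mem_reduction hτ hS
  obtain ⟨W, hW, hWadd⟩ := exists_nhds_zero_half hV
  obtain ⟨W₀, hW₀, hW₀solid, hW₀sub⟩ := hτ.2.2 _ hW
  have h0W : (0 : X) ∈ W := mem_of_mem_nhds hW
  refine ⟨USet W₀ a, USet_mem (mem_univ a) ha0 hW₀, ?_, ?_⟩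
  · intro y hy
    apply hVS
    have : |y| ⊓ a ∈ V := by
      have := hWadd _ (hW₀sub hy) _ h0W
      rwa [add_zero] at this
    exact this
  · intro y hy z hz
    apply hVS
    have hsum : |y| ⊓ a + |z| ⊓ a ∈ V := hWadd _ (hW₀sub hy) _ (hW₀sub hz)
    refine hVsolid hsum ?_
    have h1 : (0:X) ≤ |y + z| ⊓ a := le_inf (abs_nonneg _) ha0
    have h2 : (0:X) ≤ |y| ⊓ a + |z| ⊓ a :=
      add_nonneg (le_inf (abs_nonneg _) ha0) (le_inf (abs_nonneg _) ha0)
    rw [abs_of_nonneg h1, abs_of_nonneg h2]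
    exact abs_inf_subadd ha0

lemma unb_nhds_eq {τ : TopologicalSpace X} (hτ : IsLocallySolidTop τ) (x : X) :
    @nhds X (unbTopology τ Set.univ) x = Filter.map (x + ·) (unbNhdsZero τ Set.univ) := by
  refine TopologicalSpace.nhds_mkOfNhds _ _ ?_ ?_
  · intro z
    have : pure z = Filter.map (z + ·) (pure (0 : X)) := by
      rw [Filter.map_pure, add_zero]
    rw [this]
    exact Filter.map_mono (pure_le_unb τ Set.univ)
  · intro z s hs
    rw [Filter.mem_map] at hs
    obtain ⟨T, hT, hTS, hTadd⟩ := unb_add_split hτ hs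
    rw [Filter.eventually_map]
    refine Filter.mem_of_superset hT fun t ht => ?_
    show s ∈ Filter.map (fun w => z + t + w) (unbNhdsZero τ Set.univ)
    rw [Filter.mem_map]
    refine Filter.mem_of_superset hT fun u hu => ?_
    have h3 : t + u ∈ (z + ·) ⁻¹' s := hTadd t ht u hu
    simpa [add_assoc] using h3

end FilterLemmas
section GroupLemmas

set_option linter.unusedSectionVars false
set_option maxHeartbeats 1000000

lemma unb_neg (τ : TopologicalSpace X) (A : Set X) :
    Filter.Tendsto Neg.neg (unbNhdsZero τ A) (unbNhdsZero τ A) := by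
  rw [unbNhdsZero, Filter.tendsto_iInf]
  intro a
  rw [Filter.tendsto_iInf]
  intro ha
  rw [Filter.tendsto_comap_iff]
  have h1 : ((fun x : X => |x| ⊓ a) ∘ Neg.neg) = fun x : X => |x| ⊓ a := by
    funext x; simp [abs_neg]
  rw [h1]
  exact Filter.tendsto_iInf' a (Filter.tendsto_iInf' ha Filter.tendsto_comap)

lemma unb_nhds_zero_eq {τ : TopologicalSpace X} (hτ : IsLocallySolidTop τ) :
    @nhds X (unbTopology τ Set.univ) 0 = unbNhdsZero τ Set.univ := by
  rw [unb_nhds_eq hτ 0]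
  have : (fun x : X => 0 + x) = id := funext fun x => zero_add x
  rw [this, Filter.map_id]

lemma unb_topologicalAddGroup {τ : TopologicalSpace X} (hτ : IsLocallySolidTop τ) :
    @IsTopologicalAddGroup X (unbTopology τ Set.univ) _ := by
  letI := unbTopology τ Set.univ
  have h0 : 𝓝 (0 : X) = unbNhdsZero τ Set.univ := unb_nhds_zero_eq hτ
  refine IsTopologicalAddGroup.of_comm_of_nhds_zero ?_ ?_ ?_
  · rw [h0]
    rw [Filter.tendsto_def]
    intro S hS
    obtain ⟨T, hT, hTS, hTadd⟩ := unb_add_split hτ hS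
    refine Filter.mem_of_superset (Filter.prod_mem_prod hT hT) ?_
    rintro ⟨y, z⟩ ⟨hy, hz⟩
    exact hTadd y hy z hz
  · rw [h0]
    exact unb_neg τ Set.univ
  · intro x₀
    rw [h0, unb_nhds_eq hτ x₀]

lemma forward_dir {τ : TopologicalSpace X} (hτ : IsLocallySolidTop τ)
    (hcg : (unbNhdsZero τ Set.univ).IsCountablyGenerated) :
    ∃ A : Set X, A.Countable ∧ @closure X τ (idealGenerated A) = Set.univ := by
  letI := τ
  haveI := hτ.1
  haveI := hτ.2.1
  haveI := hcg
  obtain ⟨s, hs⟩ := (unbNhdsZero τ Set.univ).exists_antitone_basis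
  have hred : ∀ n, ∃ a : X, 0 ≤ a ∧ ∃ V ∈ 𝓝 (0 : X), IsSolid V ∧ USet V a ⊆ s n :=
    fun n => unb_mem_reduction hτ (hs.mem n)
  choose a ha0 V hV hVsolid hVsub using hred
  refine ⟨Set.range a, Set.countable_range a, ?_⟩
  set J := idealGenerated (Set.range a) with hJdef
  have hpos : ∀ z : X, 0 ≤ z → z ∈ closure J := by
    intro z hz
    rw [mem_closure_iff_nhds]
    intro N hN
    rw [← map_add_left_nhds_zero z, Filter.mem_map] at hN
    obtain ⟨W, hW, hWsolid, hWsub⟩ := hτ.2.2 _ hN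
    have hUF : USet W z ∈ unbNhdsZero τ Set.univ := USet_mem (Set.mem_univ z) hz hW
    obtain ⟨n, -, hsn⟩ := hs.toHasBasis.mem_iff.1 hUF
    have htend : Filter.Tendsto (fun k : ℕ => ((k : ℝ))⁻¹ • z) Filter.atTop (𝓝 (0 : X)) := by
      have h1 : Filter.Tendsto (fun k : ℕ => ((k : ℝ))⁻¹) Filter.atTop (𝓝 (0 : ℝ)) :=
        tendsto_inv_atTop_nhds_zero_nat
      have h2 := h1.smul_const z
      rwa [zero_smul] at h2
    obtain ⟨k, hk1, hkV⟩ : ∃ k : ℕ, 1 ≤ k ∧ ((k : ℝ))⁻¹ • z ∈ V n := by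
      have h2 : ∀ᶠ k : ℕ in Filter.atTop, ((k : ℝ))⁻¹ • z ∈ V n := htend (hV n)
      obtain ⟨k, hk⟩ := (h2.and (Filter.eventually_ge_atTop 1)).exists
      exact ⟨k, hk.2, hk.1⟩
    have hk0 : (0 : ℝ) < (k : ℝ) := by exact_mod_cast hk1
    set y := (z - k • (a n)) ⊔ 0 with hydef
    have hy0 : (0 : X) ≤ y := le_sup_right
    have hyz : y ≤ z := sup_le (sub_le_self z (nsmul_nonneg (ha0 n) k)) hz
    set d := y ⊓ a n with hddef
    have hd0 : (0 : X) ≤ d := le_inf hy0 (ha0 n)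
    have hdlek : d ≤ ((k : ℝ))⁻¹ • z := by
      have h3 : ((k : ℝ)) • d ≤ z := by
        rw [Nat.cast_smul_eq_nsmul]; exact key_lem hz (ha0 n) k
      calc d = ((k : ℝ))⁻¹ • (((k : ℝ)) • d) := by rw [inv_smul_smul₀ (ne_of_gt hk0)]
        _ ≤ ((k : ℝ))⁻¹ • z := smul_le_smul_of_nonneg_left h3 (by positivity)
    have hdV : d ∈ V n := by
      refine (hVsolid n) hkV ?_
      rw [abs_of_nonneg hd0, abs_of_nonneg (smul_nonneg (by positivity) hz)]
      exact hdlek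
    have hyU : y ∈ USet (V n) (a n) := by
      show |y| ⊓ a n ∈ V n
      rwa [abs_of_nonneg hy0]
    have h4 : |y| ⊓ z ∈ W := hsn (hVsub n hyU)
    have h5 : y ∈ W := by rwa [abs_of_nonneg hy0, inf_eq_left.mpr hyz] at h4
    set m := z ⊓ (k • a n) with hmdef
    have hm0 : (0 : X) ≤ m := le_inf hz (nsmul_nonneg (ha0 n) k)
    have hmJ : m ∈ J := mem_idealGenerated_of_le (Set.mem_range_self n) (ha0 n)
      (k := k) (by rw [abs_of_nonneg hm0]; exact inf_le_right)
    have hzm : z - m = y := by rw [hmdef, sub_inf_eq']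
    have hmz : m - z ∈ W := by
      refine hWsolid h5 ?_
      rw [show m - z = -y from by rw [← hzm]; abel, abs_neg]
    have hmN : m ∈ N := by
      have := hWsub hmz
      simpa using this
    exact ⟨m, hmN, hmJ⟩
  rw [Set.eq_univ_iff_forall]
  intro x
  have h1 : x⁺ ∈ closure J := hpos _ (posPart_nonneg x)
  have h2 : x⁻ ∈ closure J := hpos _ (negPart_nonneg x)
  have hsub : ∀ p ∈ J, ∀ q ∈ J, p - q ∈ J := by
    intro p hp q hq
    have hq' : (-1 : ℝ) • q ∈ J := (isOrderIdeal_idealGenerated _).2.2.1 _ _ hq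
    have he : p + (-1 : ℝ) • q = p - q := by rw [neg_smul, one_smul, sub_eq_add_neg]
    rw [← he]
    exact (isOrderIdeal_idealGenerated _).2.1 _ hp _ hq'
  have h3 := map_mem_closure₂ continuous_sub h1 h2 hsub
  rwa [posPart_sub_negPart] at h3

end GroupLemmas
section Backward

set_option linter.unusedSectionVars false
set_option maxHeartbeats 1000000

lemma unb_isCountablyGenerated {τ : TopologicalSpace X} (hτ : IsLocallySolidTop τ)
    (hmet : @TopologicalSpace.MetrizableSpace X τ) {A : Set X} (hA : A.Countable)
    (hcl : @closure X τ (idealGenerated A) = Set.univ) :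
    (unbNhdsZero τ Set.univ).IsCountablyGenerated := by
  letI := τ
  haveI := hτ.1
  haveI := hmet
  obtain ⟨f, hf⟩ := Set.Countable.exists_eq_range (hA.insert 0) (Set.insert_nonempty 0 A)
  set g : ℕ → X := fun n => ∑ i ∈ Finset.range n, |f i| with hgdef
  have hg0 : ∀ n, 0 ≤ g n := fun n => Finset.sum_induction _ (fun z : X => 0 ≤ z)
    (fun a b ha hb => add_nonneg ha hb) le_rfl fun i _ => abs_nonneg (f i)
  have hgmono : ∀ n m : ℕ, n ≤ m → g n ≤ g m := by
    intro n m hnm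
    induction m with
    | zero => simp_all
    | succ p ih =>
      rcases Nat.lt_or_ge n (p + 1) with h | h
      · have h2 : g (p + 1) = g p + |f p| := Finset.sum_range_succ _ p
        exact (ih (Nat.lt_succ_iff.1 h)).trans (by rw [h2]; exact le_add_of_nonneg_right (abs_nonneg _))
      · have : n = p + 1 := le_antisymm hnm h
        rw [this]
  set c : ℕ × ℕ → X := fun p => p.2 • g p.1 with hcdef
  have hc0 : ∀ p, 0 ≤ c p := fun p => nsmul_nonneg (hg0 p.1) p.2
  set J₀ := {y : X | ∃ p : ℕ × ℕ, |y| ≤ c p} with hJ₀def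
  have hJ₀ideal : IsOrderIdeal J₀ := by
    refine ⟨⟨(0, 0), by simp [hcdef, zero_nsmul]⟩, ?_, ?_, ?_⟩
    · rintro x ⟨p, hp⟩ y ⟨q, hq⟩
      refine ⟨(max p.1 q.1, p.2 + q.2), ?_⟩
      have h1 : |x + y| ≤ |x| + |y| := abs_add_le x y
      have h2 : c p ≤ p.2 • g (max p.1 q.1) := nsmul_le_nsmul_right (hgmono _ _ (le_max_left _ _)) _
      have h3 : c q ≤ q.2 • g (max p.1 q.1) := nsmul_le_nsmul_right (hgmono _ _ (le_max_right _ _)) _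
      calc |x + y| ≤ |x| + |y| := h1
        _ ≤ c p + c q := add_le_add hp hq
        _ ≤ p.2 • g (max p.1 q.1) + q.2 • g (max p.1 q.1) := add_le_add h2 h3
        _ = (p.2 + q.2) • g (max p.1 q.1) := (add_nsmul _ _ _).symm
    · rintro r x ⟨p, hp⟩
      refine ⟨(p.1, ⌈|r|⌉₊ * p.2), ?_⟩
      calc |r • x| ≤ |r| • |x| := abs_smul_le' r x
        _ ≤ |r| • c p := smul_le_smul_of_nonneg_left hp (abs_nonneg r)
        _ ≤ ((⌈|r|⌉₊ : ℝ)) • c p := smul_mono_scalar (Nat.le_ceil _) (hc0 p)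
        _ = ⌈|r|⌉₊ • c p := Nat.cast_smul_eq_nsmul ℝ _ _
        _ = (⌈|r|⌉₊ * p.2) • g p.1 := by rw [mul_comm, mul_nsmul]
    · rintro x y ⟨p, hp⟩ hxy
      exact ⟨p, hxy.trans hp⟩
  have hAJ₀ : A ⊆ J₀ := by
    intro x hx
    have : x ∈ Set.range f := by rw [← hf]; exact Set.mem_insert_of_mem 0 hx
    obtain ⟨i, rfl⟩ := this
    refine ⟨(i + 1, 1), ?_⟩
    have h2 : g (i + 1) = g i + |f i| := Finset.sum_range_succ _ i
    rw [hcdef]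
    simp only [one_nsmul]
    rw [h2]
    exact le_add_of_nonneg_left (hg0 i)
  have hclJ₀ : closure J₀ = Set.univ := by
    apply Set.eq_univ_of_univ_subset
    rw [← hcl]
    exact closure_mono (idealGenerated_min hJ₀ideal hAJ₀)
  set G := ⨅ p : ℕ × ℕ, Filter.comap (fun x => |x| ⊓ c p) (𝓝 (0 : X)) with hGdef
  have hFG : unbNhdsZero τ Set.univ = G := by
    apply le_antisymm
    · exact le_iInf fun p => iInf_le_of_le (c p) (iInf_le _ ⟨Set.mem_univ _, hc0 p⟩)
    · refine le_iInf fun u => le_iInf fun hu => ?_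
      intro S hS
      obtain ⟨T, hT, hTS⟩ := Filter.mem_comap.1 hS
      refine Filter.mem_of_superset ?_ hTS
      clear hTS hS S
      obtain ⟨W', hW', hW'solid, hW'T⟩ := hτ.2.2 T hT
      obtain ⟨W, hW, hWadd⟩ := exists_nhds_zero_half hW'
      obtain ⟨W₀, hW₀, hW₀solid, hW₀W⟩ := hτ.2.2 _ hW
      have hu_cl : u ∈ closure J₀ := by rw [hclJ₀]; trivial
      rw [mem_closure_iff_nhds] at hu_cl
      have hN : {v : X | v - u ∈ W₀} ∈ 𝓝 u := by
        rw [← map_add_left_nhds_zero u, Filter.mem_map]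
        have : (fun x => u + x) ⁻¹' {v : X | v - u ∈ W₀} = W₀ := by
          ext x; simp [add_sub_cancel_left]
        rw [this]
        exact hW₀
      obtain ⟨y, hyW₀, ⟨p, hyp⟩⟩ := hu_cl _ hN
      have claim : (fun x : X => |x| ⊓ c p) ⁻¹' W₀ ⊆ (fun x : X => |x| ⊓ u) ⁻¹' T := by
        intro x hx
        have h1 : |x| ⊓ c p ∈ W₀ := hx
        have h2 : u ≤ |y| + |u - y| := by
          calc u = y + (u - y) := by abel
            _ ≤ |y| + |u - y| := add_le_add (le_abs_self y) (le_abs_self _)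
        have hux : |x| ⊓ u ≤ |x| ⊓ |y| + |u - y| := by
          calc |x| ⊓ u ≤ |x| ⊓ (|y| + |u - y|) := inf_le_inf_left _ h2
            _ = (|y| + |u - y|) ⊓ |x| := inf_comm _ _
            _ ≤ |y| ⊓ |x| + |u - y| ⊓ |x| :=
                inf_subadd (abs_nonneg x) (abs_nonneg y) (abs_nonneg _)
            _ ≤ |x| ⊓ |y| + |u - y| := by
                rw [inf_comm]
                exact add_le_add_right inf_le_left _
        have hxy : |x| ⊓ |y| ∈ W₀ := by
          refine hW₀solid h1 ?_
          rw [abs_of_nonneg (le_inf (abs_nonneg x) (abs_nonneg y)),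
            abs_of_nonneg (le_inf (abs_nonneg x) (hc0 p))]
          exact inf_le_inf_left _ hyp
        have hw : |u - y| ∈ W₀ := by
          refine hW₀solid hyW₀ ?_
          rw [abs_abs, abs_sub_comm]
        have hsum : |x| ⊓ |y| + |u - y| ∈ W' := hWadd _ (hW₀W hxy) _ (hW₀W hw)
        have hfin : |x| ⊓ u ∈ W' := by
          refine hW'solid hsum ?_
          rw [abs_of_nonneg (le_inf (abs_nonneg x) hu.2),
            abs_of_nonneg (add_nonneg (le_inf (abs_nonneg x) (abs_nonneg y)) (abs_nonneg _))]
          exact hux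
        exact hW'T hfin
      refine Filter.mem_of_superset ?_ claim
      exact Filter.mem_iInf_of_mem p (Filter.preimage_mem_comap hW₀)
  rw [hFG]
  haveI : (𝓝 (0 : X)).IsCountablyGenerated := by infer_instance
  exact Filter.iInf.isCountablyGenerated _

end Backward
section T0Assembly

set_option linter.unusedSectionVars false
set_option maxHeartbeats 1000000

lemma compl_singleton_nhds_zero {τ : TopologicalSpace X}
    (hmet : @TopologicalSpace.MetrizableSpace X τ) {v : X} (hv : v ≠ 0) :
    ({v}ᶜ : Set X) ∈ @nhds X τ 0 := by
  letI := τ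
  haveI := hmet
  haveI : T1Space X := inferInstance
  exact compl_singleton_mem_nhds (Ne.symm hv)

lemma unb_t0 {τ : TopologicalSpace X} (hτ : IsLocallySolidTop τ)
    (hmet : @TopologicalSpace.MetrizableSpace X τ) :
    @T0Space X (unbTopology τ Set.univ) := by
  letI := unbTopology τ Set.univ
  rw [t0Space_iff_inseparable]
  intro x y hxy
  by_contra hne
  have hd : x - y ≠ 0 := sub_ne_zero.mpr hne
  have habs : |x - y| ≠ 0 := by
    intro h
    apply hd
    have h1 : x - y ≤ 0 := (le_abs_self _).trans h.le
    have h2 : -(x - y) ≤ 0 := (neg_le_abs _).trans h.le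
    exact le_antisymm h1 (by simpa using h2)
  have hT : ({|x - y|}ᶜ : Set X) ∈ @nhds X τ 0 := compl_singleton_nhds_zero hmet habs
  have hU : USet ({|x - y|}ᶜ) (|x - y|) ∈ unbNhdsZero τ Set.univ :=
    USet_mem (Set.mem_univ _) (abs_nonneg _) hT
  have hxU : (x + ·) '' (USet ({|x - y|}ᶜ) (|x - y|)) ∈ 𝓝 x := by
    rw [unb_nhds_eq hτ x, Filter.mem_map]
    exact Filter.mem_of_superset hU (Set.subset_preimage_image _ _)
  have hnn : 𝓝 x = 𝓝 y := hxy
  rw [hnn] at hxU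
  obtain ⟨v, hv, hvy⟩ := mem_of_mem_nhds hxU
  have hveq : v = y - x := by rw [← hvy]; exact (add_sub_cancel_left x v).symm
  have : |v| ⊓ |x - y| = |x - y| := by
    rw [hveq, abs_sub_comm, inf_idem]
  exact hv (by rw [this]; rfl)

end T0Assembly
/-- if `τ` is metrizable, then `u τ` is metrizable iff some at most
countable set generates a `τ`-dense ideal. -/
theorem stmt8 (hArch : VLArchimedean X) (τ : TopologicalSpace X)
    (hτ : IsLocallySolidTop τ) (hmet : @TopologicalSpace.MetrizableSpace X τ) :
    @TopologicalSpace.MetrizableSpace X (unbTopology τ Set.univ) ↔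
      ∃ A : Set X, A.Countable ∧ @closure X τ (idealGenerated A) = Set.univ := by
  constructor
  · intro hmet_u
    apply forward_dir hτ
    have h0 : @nhds X (unbTopology τ Set.univ) 0 = unbNhdsZero τ Set.univ :=
      unb_nhds_zero_eq hτ
    rw [← h0]
    letI := unbTopology τ Set.univ
    haveI := hmet_u
    infer_instance
  · rintro ⟨A, hA, hcl⟩
    have hcg := unb_isCountablyGenerated hτ hmet hA hcl
    have hga := unb_topologicalAddGroup hτ
    have ht0 := unb_t0 hτ hmet
    letI := unbTopology τ Set.univ
    haveI := hga
    haveI := ht0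
    letI us : UniformSpace X := IsTopologicalAddGroup.rightUniformSpace X
    haveI hucg : Filter.IsCountablyGenerated (@uniformity X us) := by
      have h1 : @uniformity X us = Filter.comap (fun p : X × X => p.2 + -p.1) (𝓝 0) := rfl
      have h2 : @nhds X (unbTopology τ Set.univ) 0 = unbNhdsZero τ Set.univ :=
        unb_nhds_zero_eq hτ
      rw [h1, h2]
      haveI := hcg
      exact Filter.comap.isCountablyGenerated _ _
    exact UniformSpace.metrizableSpace
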